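/- Let (W,S) be a Coxeter system with Hecke algebra H over A = ℤ[q,q⁻¹], and let the bar involution on H be the ring involution sending q to q⁻¹ and T_w to (T_{w⁻¹})⁻¹ (extended semilinearly). If h ∈ H lies in H_{<0} := ⊕_w q⁻¹ℤ[q⁻¹] T_w and satisfies bar(h) = h, then h = 0. -/

import Mathlib

open LaurentPolynomial in
/-- The element `ξ_s = q^{L(s)} - q^{-L(s)}` of `ℤ[q,q⁻¹]`. -/
noncomputable def heckeXi (Ls : ℕ) : LaurentPolynomial ℤ :=
  LaurentPolynomial.T (Ls : ℤ) - LaurentPolynomial.T (-(Ls : ℤ))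

/-- The Iwahori–Hecke algebra of a Coxeter system `cs` with weight function `L`,
presented as an algebra `H` over `A = ℤ[q,q⁻¹]` with a distinguished `A`-basis
`T` indexed by the group, `T 1 = 1`, and the standard multiplication rules
`T_s T_w = T_{sw}` if `ℓ(sw) > ℓ(w)` and
`T_s T_w = T_{sw} + (q^{L(s)} - q^{-L(s)}) T_w` if `ℓ(sw) < ℓ(w)`. -/
structure HeckeAlgebra {B W : Type*} [Group W] {M : CoxeterMatrix B}
    (cs : CoxeterSystem M W) (L : W → ℕ)
    (H : Type*) [Ring H] [Algebra (LaurentPolynomial ℤ) H] where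
  T : Module.Basis W (LaurentPolynomial ℤ) H
  T_one : T 1 = 1
  T_mul_gt : ∀ (i : B) (w : W), cs.length w < cs.length (cs.simple i * w) →
    T (cs.simple i) * T w = T (cs.simple i * w)
  T_mul_lt : ∀ (i : B) (w : W), cs.length (cs.simple i * w) < cs.length w →
    T (cs.simple i) * T w = T (cs.simple i * w) + heckeXi (L (cs.simple i)) • T w

/-- The `A`-submodule `H_{<0} = ⊕_{w ∈ W} q⁻¹ℤ[q⁻¹] T_w`, realised as the
`ℤ`-span of the elements `q^n T_w` with `n < 0`. -/
def HeckeAlgebra.Hlt {B W : Type*} [Group W] {M : CoxeterMatrix B}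
    {cs : CoxeterSystem M W} {L : W → ℕ}
    {H : Type*} [Ring H] [Algebra (LaurentPolynomial ℤ) H]
    (hk : HeckeAlgebra cs L H) : Submodule ℤ H :=
  Submodule.span ℤ
    {x | ∃ (w : W) (n : ℤ), n < 0 ∧
      x = (LaurentPolynomial.T n : LaurentPolynomial ℤ) • hk.T w}

/-- The bar involution of the Iwahori–Hecke algebra: the ring involution with
`bar q = q⁻¹` and `bar (T_w) = (T_{w⁻¹})⁻¹`, extended semilinearly with respect
to the involution `q ↦ q⁻¹` of `ℤ[q,q⁻¹]`. -/
structure HeckeBar {B W : Type*} [Group W] {M : CoxeterMatrix B}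
    {cs : CoxeterSystem M W} {L : W → ℕ}
    {H : Type*} [Ring H] [Algebra (LaurentPolynomial ℤ) H]
    (hk : HeckeAlgebra cs L H) where
  bar : H → H
  bar_add : ∀ a b : H, bar (a + b) = bar a + bar b
  bar_smul : ∀ (a : LaurentPolynomial ℤ) (h : H),
    bar (a • h) = (LaurentPolynomial.invert a) • bar h
  bar_mul : ∀ a b : H, bar (a * b) = bar a * bar b
  bar_T_mul : ∀ w : W, bar (hk.T w) * hk.T w⁻¹ = 1
  T_mul_bar : ∀ w : W, hk.T w⁻¹ * bar (hk.T w) = 1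

namespace HeckeAux

open LaurentPolynomial

variable {B W : Type*} [Group W] {M : CoxeterMatrix B} {cs : CoxeterSystem M W} {L : W → ℕ}
  {H : Type*} [Ring H] [Algebra (LaurentPolynomial ℤ) H]

/-- Laurent polynomials supported in negative degrees, as a `ℤ`-submodule. -/
noncomputable def negSupp : Submodule ℤ (LaurentPolynomial ℤ) where
  carrier := {a | ∀ n : ℤ, 0 ≤ n → a.coeff n = 0}
  add_mem' := by
    intro a b ha hb n hn
    show (a + b).coeff n = 0
    rw [show (a + b).coeff n = a.coeff n + b.coeff n from rfl, ha n hn, hb n hn, add_zero]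
  zero_mem' := fun n _ => rfl
  smul_mem' := by
    intro c a ha n hn
    show (c • a).coeff n = 0
    rw [show (c • a).coeff n = c • a.coeff n from rfl, ha n hn, smul_zero]

lemma negSupp_eq_zero {a : LaurentPolynomial ℤ} (ha : a ∈ negSupp) (hfix : invert a = a) :
    a = 0 := by
  ext n
  rcases le_or_gt 0 n with h | h
  · exact ha n h
  · have : (invert a).coeff n = a.coeff (-n) := invert_apply a n
    rw [hfix] at this
    rw [this]
    exact ha (-n) (by omega)

lemma T_mem_negSupp {n : ℤ} (hn : n < 0) : (T n : LaurentPolynomial ℤ) ∈ negSupp := by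
  show ∀ m : ℤ, 0 ≤ m → (T n : LaurentPolynomial ℤ).coeff m = 0
  intro m hm
  rw [T_apply, if_neg (by omega)]

lemma repr_mem_negSupp (hk : HeckeAlgebra cs L H) {h : H} (hmem : h ∈ hk.Hlt) (w : W) :
    hk.T.repr h w ∈ negSupp := by
  classical
  induction hmem using Submodule.span_induction with
  | mem x hx =>
    obtain ⟨v, n, hn, rfl⟩ := hx
    rw [map_smul, Module.Basis.repr_self, Finsupp.smul_apply, Finsupp.single_apply]
    split
    · rw [smul_eq_mul, mul_one]; exact T_mem_negSupp hn
    · rw [smul_zero]; exact zero_mem _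
  | zero => rw [map_zero]; exact zero_mem _
  | add x y _ _ hx hy => rw [map_add, Finsupp.add_apply]; exact add_mem hx hy
  | smul c x _ hx =>
    rw [map_zsmul, Finsupp.smul_apply]
    exact Submodule.smul_mem _ c hx

/-- The span of the `T_v` with `ℓ(v) < n`. -/
noncomputable def Slt (hk : HeckeAlgebra cs L H) (n : ℕ) : Submodule (LaurentPolynomial ℤ) H :=
  Submodule.span _ (hk.T '' {v | cs.length v < n})

lemma Slt_mono (hk : HeckeAlgebra cs L H) {m n : ℕ} (h : m ≤ n) : Slt hk m ≤ Slt hk n :=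
  Submodule.span_mono (Set.image_mono fun _ hv => lt_of_lt_of_le hv h)

lemma repr_eq_zero_of_mem_Slt (hk : HeckeAlgebra cs L H) {n : ℕ} {x : H}
    (hx : x ∈ Slt hk n) {w : W} (hw : n ≤ cs.length w) : hk.T.repr x w = 0 := by
  classical
  induction hx using Submodule.span_induction with
  | mem x hx =>
    obtain ⟨v, hv, rfl⟩ := hx
    rw [Module.Basis.repr_self, Finsupp.single_apply, if_neg]
    rintro rfl
    exact absurd hw (by simpa using hv)
  | zero => rw [map_zero]; rfl
  | add x y _ _ hx hy => rw [map_add, Finsupp.add_apply, hx, hy, add_zero]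
  | smul c x _ hx => rw [map_smul, Finsupp.smul_apply, hx, smul_zero]

lemma T_simple_mul_mem (hk : HeckeAlgebra cs L H) (i : B) {n : ℕ} {x : H}
    (hx : x ∈ Slt hk n) : hk.T (cs.simple i) * x ∈ Slt hk (n + 1) := by
  induction hx using Submodule.span_induction with
  | mem x hx =>
    obtain ⟨v, hv, rfl⟩ := hx
    have hv' : cs.length v < n := hv
    rcases cs.length_simple_mul v i with hgt | hlt
    · rw [hk.T_mul_gt i v (by omega)]
      exact Submodule.subset_span ⟨_, by simp only [Set.mem_setOf_eq]; omega, rfl⟩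
    · rw [hk.T_mul_lt i v (by omega)]
      refine add_mem (Submodule.subset_span ⟨_, by simp only [Set.mem_setOf_eq]; omega, rfl⟩) ?_
      exact Submodule.smul_mem _ _
        (Submodule.subset_span ⟨_, by simp only [Set.mem_setOf_eq]; omega, rfl⟩)
  | zero => rw [mul_zero]; exact zero_mem _
  | add x y _ _ hx hy => rw [mul_add]; exact add_mem hx hy
  | smul c x _ hx => rw [mul_smul_comm]; exact Submodule.smul_mem _ _ hx

lemma bar_T_simple (hk : HeckeAlgebra cs L H) (bar : HeckeBar hk) (i : B) :
    bar.bar (hk.T (cs.simple i))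
      = hk.T (cs.simple i) - heckeXi (L (cs.simple i)) • (1 : H) := by
  set ξ := heckeXi (L (cs.simple i))
  have hlt : cs.length (cs.simple i * cs.simple i) < cs.length (cs.simple i) := by
    rw [cs.simple_mul_simple_self, cs.length_one, cs.length_simple]
    norm_num
  have hmul : hk.T (cs.simple i) * (hk.T (cs.simple i) - ξ • (1 : H)) = 1 := by
    rw [mul_sub, hk.T_mul_lt i _ hlt, cs.simple_mul_simple_self, hk.T_one,
      mul_smul_comm, mul_one]
    abel
  have h2 := bar.bar_T_mul (cs.simple i)
  rw [cs.inv_simple] at h2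
  calc bar.bar (hk.T (cs.simple i))
      = bar.bar (hk.T (cs.simple i)) * (hk.T (cs.simple i) * (hk.T (cs.simple i) - ξ • 1)) := by
        rw [hmul, mul_one]
    _ = (bar.bar (hk.T (cs.simple i)) * hk.T (cs.simple i)) * (hk.T (cs.simple i) - ξ • 1) :=
        (mul_assoc _ _ _).symm
    _ = hk.T (cs.simple i) - ξ • 1 := by rw [h2, one_mul]

lemma bar_T_sub_mem (hk : HeckeAlgebra cs L H) (bar : HeckeBar hk) :
    ∀ (n : ℕ) (w : W), cs.length w = n → bar.bar (hk.T w) - hk.T w ∈ Slt hk n := by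
  intro n
  induction n using Nat.strong_induction_on with
  | _ n ih =>
    intro w hw
    rcases eq_or_ne w 1 with rfl | hne
    · have h1 : bar.bar (hk.T (1 : W)) = hk.T 1 := by
        have := bar.bar_T_mul (1 : W)
        rw [inv_one, hk.T_one, mul_one] at this
        rw [hk.T_one]
        exact this
      rw [h1, sub_self]; exact zero_mem _
    · obtain ⟨i, hdesc⟩ := cs.exists_leftDescent_of_ne_one hne
      set u := cs.simple i * w with hu
      have hw' : w = cs.simple i * u := by
        rw [hu, ← mul_assoc, cs.simple_mul_simple_self, one_mul]
      have hlen : cs.length u + 1 = n := by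
        rw [← hw]; exact (cs.isLeftDescent_iff).mp hdesc
      have hTmul : hk.T (cs.simple i) * hk.T u = hk.T w := by
        have hlu : cs.length u < cs.length (cs.simple i * u) := by
          rw [← hw', hw]; omega
        rw [hk.T_mul_gt i u hlu, ← hw']
      have hru : bar.bar (hk.T u) - hk.T u ∈ Slt hk (cs.length u) :=
        ih (cs.length u) (by omega) u rfl
      set r := bar.bar (hk.T u) - hk.T u with hr
      set ξ := heckeXi (L (cs.simple i)) with hξ
      have hb : bar.bar (hk.T u) = hk.T u + r := by rw [hr]; abel
      have expand : bar.bar (hk.T w) - hk.T w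
          = hk.T (cs.simple i) * r - ξ • hk.T u - ξ • r := by
        rw [← hTmul, bar.bar_mul, bar_T_simple hk bar i, hb, ← hξ,
          sub_mul, mul_add, smul_mul_assoc, one_mul, smul_add]
        abel
      rw [expand]
      refine sub_mem (sub_mem ?_ ?_) ?_
      · have := T_simple_mul_mem hk i hru
        rwa [hlen] at this
      · exact Submodule.smul_mem _ _
          (Submodule.subset_span ⟨u, by simp only [Set.mem_setOf_eq]; omega, rfl⟩)
      · exact Submodule.smul_mem _ _ (Slt_mono hk (by omega) hru)

end HeckeAux

/-- If `h ∈ H_{<0}` is fixed by the bar involution, then `h = 0`. -/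
theorem heckeAlgebra_bar_fixed_in_Hlt_eq_zero
    {B W : Type*} [Group W] {M : CoxeterMatrix B} (cs : CoxeterSystem M W)
    (L : W → ℕ) (H : Type*) [Ring H] [Algebra (LaurentPolynomial ℤ) H]
    (hk : HeckeAlgebra cs L H) (bar : HeckeBar hk)
    (h : H) (hmem : h ∈ hk.Hlt) (hfix : bar.bar h = h) :
    h = 0 := by
  classical
  open LaurentPolynomial HeckeAux in
  by_contra hne
  set c := hk.T.repr h with hc
  have hc0 : c ≠ 0 := fun h0 => hne (by
    have := hk.T.repr.map_eq_zero_iff.mp (hc ▸ h0)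
    exact this)
  have hsupp : c.support.Nonempty := Finsupp.support_nonempty_iff.mpr hc0
  obtain ⟨w, hwmem, hwmax⟩ := c.support.exists_max_image cs.length hsupp
  have hsum : h = ∑ v ∈ c.support, c v • hk.T v := by
    conv_lhs => rw [← hk.T.linearCombination_repr h]
    rw [Finsupp.linearCombination_apply, Finsupp.sum]
  let barH : H →+ H := AddMonoidHom.mk' bar.bar bar.bar_add
  have hbar : bar.bar h
      = ∑ v ∈ c.support, (invert (c v)) • (hk.T v + (bar.bar (hk.T v) - hk.T v)) := by
    conv_lhs => rw [hsum]
    rw [show bar.bar (∑ v ∈ c.support, c v • hk.T v)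
        = ∑ v ∈ c.support, bar.bar (c v • hk.T v) from map_sum barH _ _]
    refine Finset.sum_congr rfl fun v _ => ?_
    rw [bar.bar_smul]
    congr 1
    abel
  have hrw : hk.T.repr (bar.bar h) w = invert (c w) := by
    rw [hbar, map_sum, Finsupp.finset_sum_apply]
    have hterm : ∀ v ∈ c.support,
        hk.T.repr ((invert (c v)) • (hk.T v + (bar.bar (hk.T v) - hk.T v))) w
          = invert (c v) * (Finsupp.single v (1 : LaurentPolynomial ℤ)) w := by
      intro v hv
      rw [map_smul, Finsupp.smul_apply, smul_eq_mul, map_add, Finsupp.add_apply,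
        Module.Basis.repr_self,
        HeckeAux.repr_eq_zero_of_mem_Slt hk
          (HeckeAux.bar_T_sub_mem hk bar (cs.length v) v rfl) (hwmax v hv),
        add_zero]
    rw [Finset.sum_congr rfl hterm, Finset.sum_eq_single_of_mem w hwmem]
    · rw [Finsupp.single_apply, if_pos rfl, mul_one]
    · intro v _ hvw
      rw [Finsupp.single_apply, if_neg hvw, mul_zero]
  have hfixc : invert (c w) = c w := by rw [← hrw, hfix]
  have hw0 : c w = 0 :=
    HeckeAux.negSupp_eq_zero (HeckeAux.repr_mem_negSupp hk hmem w) hfixc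
  exact (Finsupp.mem_support_iff.mp hwmem) hw0
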